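/- For every finite hypergraph H there exists a synchronous nonlocal game, with finite input set I, output set O of cardinality 3, and winning rule λ : I × I × O × O → Bool, such that for every unital C*-algebra A, the hypergraph H has a solution in A if and only if the game has a solution in A. -/

import Mathlib

/-- A finite hypergraph: a finite vertex set `Fin n` together with a set of edges, each a
set of vertices, such that every vertex lies in some edge. -/
structure FinHypergraph where
  n : ℕ
  edges : Finset (Finset (Fin n))
  covers : ∀ v : Fin n, ∃ e ∈ edges, v ∈ e

/-- A projection in a `*`-ring: a self-adjoint idempotent. -/
def IsProjection {A : Type*} [Ring A] [StarRing A] (a : A) : Prop :=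
  IsSelfAdjoint a ∧ a * a = a

/-- A quantum representation of the hypergraph `H` on the Hilbert space `ℋ`: a family of
projections on `ℋ`, one for each vertex, summing to `1` over each edge. -/
def IsQuantumRep (H : FinHypergraph) (ℋ : Type*) [NormedAddCommGroup ℋ]
    [InnerProductSpace ℂ ℋ] [CompleteSpace ℋ] (p : Fin H.n → ℋ →L[ℂ] ℋ) : Prop :=
  (∀ v, IsProjection (p v)) ∧ ∀ e ∈ H.edges, ∑ v ∈ e, p v = 1

/-- The hypergraph `H` admits a quantum representation on some nonzero complex Hilbert
space; equivalently, the free hypergraph C*-algebra `C*(H)` is nonzero. -/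
def AdmitsQRep (H : FinHypergraph) : Prop :=
  ∃ (ℋ : Type) (i₁ : NormedAddCommGroup ℋ)
    (i₂ : @InnerProductSpace ℂ ℋ _ i₁.toSeminormedAddCommGroup) (i₃ : CompleteSpace ℋ),
    letI := i₁; letI := i₂; letI := i₃;
    Nontrivial ℋ ∧ ∃ p : Fin H.n → ℋ →L[ℂ] ℋ, IsQuantumRep H ℋ p

/-- A solution of the hypergraph `H` in a unital `*`-ring `A` (in particular, in a unital
C*-algebra): a family of projections indexed by the vertices, summing to `1` over each
edge. -/
def IsSolution (H : FinHypergraph) (A : Type*) [Ring A] [StarRing A]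
    (p : Fin H.n → A) : Prop :=
  (∀ v, IsProjection (p v)) ∧ ∀ e ∈ H.edges, ∑ v ∈ e, p v = 1

namespace HGG


/-- Input set of the game. -/
abbrev In (H : FinHypergraph) : Type := Fin H.n ⊕ (Finset (Fin H.n) × Fin (H.n + 2))

/-- Sorted list of vertices of an edge. -/
def srt (H : FinHypergraph) (e : Finset (Fin H.n)) : List (Fin H.n) :=
  Finset.sort e (· ≤ ·)

/-- Forbidden quadruples of the game. -/
def Bad (H : FinHypergraph) (x y : In H) (a b : Fin 3) : Prop :=
  (∃ e ∈ H.edges, ∃ i : Fin (H.n+2), ∃ u : Fin H.n,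
     (i:ℕ)+1 < e.card ∧ (srt H e)[(i:ℕ)+1]? = some u ∧
     x = Sum.inr (e, i) ∧ y = Sum.inl u ∧
     ((a = 1 ∧ b = 1) ∨ (a = 1 ∧ b = 2) ∨ (a = 0 ∧ b = 0) ∨ (a = 2 ∧ b = 0))) ∨
  (∃ e ∈ H.edges, ∃ i j : Fin (H.n+2),
     (i:ℕ)+2 < e.card ∧ (j:ℕ) = (i:ℕ)+1 ∧
     x = Sum.inr (e, j) ∧ y = Sum.inr (e, i) ∧
     ((a = 0 ∧ b = 2) ∨ (a = 1 ∧ b = 0) ∨ (a = 1 ∧ b = 1) ∨ (a = 2 ∧ b = 0) ∨ (a = 2 ∧ b = 1))) ∨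
  (∃ e ∈ H.edges, ∃ u : Fin H.n,
     2 ≤ e.card ∧ (srt H e)[0]? = some u ∧
     x = Sum.inr (e, (0 : Fin (H.n+2))) ∧ y = Sum.inl u ∧
     ((a = 0 ∧ b = 1) ∨ (a = 0 ∧ b = 2) ∨ (a = 1 ∧ b = 0) ∨ (a = 2 ∧ b = 0))) ∨
  (∃ e ∈ H.edges, ∃ i : Fin (H.n+2),
     (i:ℕ)+2 = e.card ∧ x = Sum.inr (e, i) ∧
     y = Sum.inr ((∅ : Finset (Fin H.n)), (0 : Fin (H.n+2))) ∧ a = 2) ∨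
  (∃ e ∈ H.edges, ∃ u : Fin H.n, e.card = 1 ∧ (srt H e)[0]? = some u ∧
     x = Sum.inl u ∧ y = Sum.inr ((∅ : Finset (Fin H.n)), (0 : Fin (H.n+2))) ∧ (a = 1 ∨ a = 2)) ∨
  ((∅ : Finset (Fin H.n)) ∈ H.edges ∧ x = Sum.inr ((∅ : Finset (Fin H.n)), (0 : Fin (H.n+2))) ∧
     y = Sum.inr ((∅ : Finset (Fin H.n)), (1 : Fin (H.n+2))))

open Classical in
/-- Rule function of the game. -/
noncomputable def lam (H : FinHypergraph) : In H × In H × Fin 3 × Fin 3 → Bool :=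
  fun t => if t.1 = t.2.1 then decide (t.2.2.1 = t.2.2.2)
           else decide (¬ Bad H t.1 t.2.1 t.2.2.1 t.2.2.2)

lemma lam_diag (H : FinHypergraph) (x : In H) (a b : Fin 3) :
    lam H (x, x, a, b) = true ↔ a = b := by
  simp [lam]

lemma lam_false (H : FinHypergraph) (x y : In H) (a b : Fin 3) :
    lam H (x, y, a, b) = false ↔ ((x = y ∧ a ≠ b) ∨ (x ≠ y ∧ Bad H x y a b)) := by
  classical
  by_cases h : x = y
  · subst h; simp [lam]
  · simp [lam, h, not_not]


section CStar
variable {A : Type} [CStarAlgebra A]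

lemma projection_zero : IsProjection (0 : A) := ⟨by simp [IsSelfAdjoint], by simp⟩

lemma projection_compl {p : A} (hp : IsProjection p) : IsProjection (1 - p) := by
  constructor
  · have := hp.1.star_eq
    simp only [IsSelfAdjoint, star_sub, star_one, this]
  · rw [sub_mul, one_mul, mul_sub, mul_one, hp.2]; abel

lemma pairwise_orth {V : Type*} [DecidableEq V] {e : Finset V} {p : V → A}
    (hp : ∀ v, IsProjection (p v)) (hsum : ∑ v ∈ e, p v = 1)
    {v w : V} (hv : v ∈ e) (hw : w ∈ e) (hvw : v ≠ w) : p v * p w = 0 := by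
  letI := CStarAlgebra.spectralOrder A
  haveI := CStarAlgebra.spectralOrderedRing A
  have hle : p v + p w ≤ 1 := by
    rw [← hsum, ← Finset.sum_pair hvw]
    refine Finset.sum_le_sum_of_subset_of_nonneg ?_ ?_
    · intro x hx
      simp only [Finset.mem_insert, Finset.mem_singleton] at hx
      rcases hx with rfl | rfl <;> assumption
    · intro i _ _
      calc (0:A) ≤ star (p i) * p i := star_mul_self_nonneg (p i)
        _ = p i * p i := by rw [(hp i).1.star_eq]
        _ = p i := (hp i).2
  have hwle : p w ≤ 1 - p v := by rw [le_sub_iff_add_le, add_comm]; exact hle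
  have h2 : star (p v) * p w * p v ≤ star (p v) * (1 - p v) * p v :=
    star_left_conjugate_le_conjugate hwle (p v)
  have h3 : star (p v) * (1 - p v) * p v = 0 := by
    rw [(hp v).1.star_eq, mul_sub, mul_one, (hp v).2, sub_self, zero_mul]
  have h4 : star (p w * p v) * (p w * p v) ≤ 0 := by
    calc star (p w * p v) * (p w * p v) = star (p v) * p w * p v := by
          rw [star_mul, (hp w).1.star_eq, mul_assoc, mul_assoc, ← mul_assoc (p w), (hp w).2]
      _ ≤ 0 := h3 ▸ h2
  have h5 : p w * p v = 0 := by
    rw [← CStarRing.star_mul_self_eq_zero_iff]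
    exact le_antisymm h4 (star_mul_self_nonneg _)
  calc p v * p w = star (p w * p v) := by rw [star_mul, (hp w).1.star_eq, (hp v).1.star_eq]
    _ = 0 := by rw [h5, star_zero]

/-- Partial sums of a list. -/
def PS (L : List A) (m : ℕ) : A := ∑ j ∈ Finset.range m, L.getD j 0

variable {L : List A}

lemma gd_proj (hproj : ∀ x ∈ L, IsProjection x) (i : ℕ) : IsProjection (L.getD i 0) := by
  by_cases h : i < L.length
  · rw [List.getD_eq_getElem?_getD, List.getElem?_eq_getElem h]
    exact hproj _ (List.getElem_mem h)
  · rw [List.getD_eq_default _ _ (le_of_not_gt h)]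
    exact projection_zero

lemma PS_mul_g (horth : ∀ i j, i ≠ j → L.getD i 0 * L.getD j 0 = 0)
    {m i : ℕ} (h : m ≤ i) : PS L m * L.getD i 0 = 0 := by
  rw [PS, Finset.sum_mul]
  exact Finset.sum_eq_zero fun j hj =>
    horth j i (by rw [Finset.mem_range] at hj; omega)

lemma g_mul_PS (horth : ∀ i j, i ≠ j → L.getD i 0 * L.getD j 0 = 0)
    {m i : ℕ} (h : m ≤ i) : L.getD i 0 * PS L m = 0 := by
  rw [PS, Finset.mul_sum]
  exact Finset.sum_eq_zero fun j hj =>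
    horth i j (by rw [Finset.mem_range] at hj; omega)

lemma PS_mul_g_lt (hproj : ∀ x ∈ L, IsProjection x)
    (horth : ∀ i j, i ≠ j → L.getD i 0 * L.getD j 0 = 0)
    {m i : ℕ} (h : i < m) : PS L m * L.getD i 0 = L.getD i 0 := by
  rw [PS, Finset.sum_mul]
  rw [Finset.sum_eq_single i (fun j _ hj => horth j i hj)
    (fun hi => absurd (Finset.mem_range.mpr h) hi)]
  exact (gd_proj hproj i).2

lemma g_mul_PS_lt (hproj : ∀ x ∈ L, IsProjection x)
    (horth : ∀ i j, i ≠ j → L.getD i 0 * L.getD j 0 = 0)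
    {m i : ℕ} (h : i < m) : L.getD i 0 * PS L m = L.getD i 0 := by
  rw [PS, Finset.mul_sum]
  rw [Finset.sum_eq_single i (fun j _ hj => horth i j (Ne.symm hj))
    (fun hi => absurd (Finset.mem_range.mpr h) hi)]
  exact (gd_proj hproj i).2

lemma PS_proj (hproj : ∀ x ∈ L, IsProjection x)
    (horth : ∀ i j, i ≠ j → L.getD i 0 * L.getD j 0 = 0)
    (m : ℕ) : IsProjection (PS L m) := by
  constructor
  · simp only [IsSelfAdjoint, PS, star_sum]
    exact Finset.sum_congr rfl fun j _ => (gd_proj hproj j).1.star_eq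
  · conv_lhs => rw [PS, Finset.sum_mul]
    exact Finset.sum_congr rfl fun j hj =>
      g_mul_PS_lt hproj horth (Finset.mem_range.mp hj)

lemma PS_mul_PS (hproj : ∀ x ∈ L, IsProjection x)
    (horth : ∀ i j, i ≠ j → L.getD i 0 * L.getD j 0 = 0)
    {m m' : ℕ} (h : m ≤ m') : PS L m' * PS L m = PS L m := by
  have hm : PS L m = ∑ j ∈ Finset.range m, L.getD j 0 := rfl
  conv_lhs => rw [hm, Finset.mul_sum]
  exact Finset.sum_congr rfl fun j hj =>
    PS_mul_g_lt hproj horth (lt_of_lt_of_le (Finset.mem_range.mp hj) h)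

lemma PS_mul_PS' (hproj : ∀ x ∈ L, IsProjection x)
    (horth : ∀ i j, i ≠ j → L.getD i 0 * L.getD j 0 = 0)
    {m m' : ℕ} (h : m ≤ m') : PS L m * PS L m' = PS L m := by
  have hm : PS L m = ∑ j ∈ Finset.range m, L.getD j 0 := rfl
  conv_lhs => rw [hm, Finset.sum_mul]
  exact Finset.sum_congr rfl fun j hj =>
    g_mul_PS_lt hproj horth (lt_of_lt_of_le (Finset.mem_range.mp hj) h)

lemma PS_len (L : List A) : PS L L.length = L.sum := by
  induction L with
  | nil => simp [PS]
  | cons a t ih =>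
    rw [PS, List.length_cons, Finset.sum_range_succ']
    simp only [List.getD_cons_succ, List.getD_cons_zero, List.sum_cons]
    rw [← PS, ih, add_comm]

lemma eq13 {x0 x1 x2 y0 y1 y2 : A} (hx : x0+x1+x2 = 1) (hy : y0+y1+y2 = 1)
    (h1 : x1*y1 = 0) (h2 : x1*y2 = 0) (h3 : x0*y0 = 0) (h4 : x2*y0 = 0) : x1 = y0 :=
  calc x1 = x1 * (y0+y1+y2) := by rw [hy, mul_one]
    _ = x1 * y0 := by rw [mul_add, mul_add, h1, h2, add_zero, add_zero]
    _ = (x0+x1+x2) * y0 := by rw [add_mul, add_mul, h3, h4, zero_add, add_zero]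
    _ = y0 := by rw [hx, one_mul]

lemma eq03 {x0 x1 x2 y0 y1 y2 : A} (hx : x0+x1+x2 = 1) (hy : y0+y1+y2 = 1)
    (h1 : x0*y1 = 0) (h2 : x0*y2 = 0) (h3 : x1*y0 = 0) (h4 : x2*y0 = 0) : x0 = y0 :=
  calc x0 = x0 * (y0+y1+y2) := by rw [hy, mul_one]
    _ = x0 * y0 := by rw [mul_add, mul_add, h1, h2, add_zero, add_zero]
    _ = (x0+x1+x2) * y0 := by rw [add_mul, add_mul, h3, h4, add_zero, add_zero]
    _ = y0 := by rw [hx, one_mul]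

lemma sum13 {x0 x1 x2 y0 y1 y2 : A} (hx : x0+x1+x2 = 1) (hy : y0+y1+y2 = 1)
    (h1 : x0*y2 = 0) (h2 : x1*y0 = 0) (h3 : x1*y1 = 0) (h4 : x2*y0 = 0) (h5 : x2*y1 = 0) :
    x0 = y0 + y1 :=
  calc x0 = x0 * (y0+y1+y2) := by rw [hy, mul_one]
    _ = x0 * (y0+y1) := by rw [mul_add, h1, add_zero]
    _ = (x0+x1+x2) * (y0+y1) := by
        rw [add_mul, add_mul, mul_add, mul_add, mul_add, h2, h3, h4, h5]; abel
    _ = y0 + y1 := by rw [hx, one_mul]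

end CStar

lemma projection_one {A : Type} [CStarAlgebra A] : IsProjection (1 : A) :=
  ⟨by simp [IsSelfAdjoint], by simp⟩

open Classical in
/-- The strategy built from a hypergraph solution. -/
noncomputable def qF (H : FinHypergraph) {A : Type} [CStarAlgebra A] (p : Fin H.n → A) :
    In H → Fin 3 → A
  | Sum.inl v => ![p v, 1 - p v, 0]
  | Sum.inr (e, i) =>
      if e ∈ H.edges ∧ (i : ℕ) + 1 < e.card then
        ![PS ((srt H e).map p) ((i:ℕ)+1), ((srt H e).map p).getD ((i:ℕ)+1) 0,
          1 - PS ((srt H e).map p) ((i:ℕ)+2)]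
      else ![1, 0, 0]

section Fwd
variable {H : FinHypergraph} {A : Type} [CStarAlgebra A] {p : Fin H.n → A}

lemma qF_inl (v : Fin H.n) : qF H p (Sum.inl v) = ![p v, 1 - p v, 0] := rfl

open Classical in
lemma qF_inr_pos {e : Finset (Fin H.n)} {i : Fin (H.n+2)} (h1 : e ∈ H.edges)
    (h2 : (i:ℕ) + 1 < e.card) :
    qF H p (Sum.inr (e, i)) =
      ![PS ((srt H e).map p) ((i:ℕ)+1), ((srt H e).map p).getD ((i:ℕ)+1) 0,
        1 - PS ((srt H e).map p) ((i:ℕ)+2)] := by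
  show (if _ ∧ _ then _ else _) = _
  rw [if_pos ⟨h1, h2⟩]

open Classical in
lemma qF_inr_neg {e : Finset (Fin H.n)} {i : Fin (H.n+2)}
    (h : ¬ (e ∈ H.edges ∧ (i:ℕ) + 1 < e.card)) :
    qF H p (Sum.inr (e, i)) = ![1, 0, 0] := by
  show (if _ ∧ _ then _ else _) = _
  rw [if_neg h]

variable (hsol : IsSolution H A p)
include hsol

lemma LL_proj (e : Finset (Fin H.n)) : ∀ x ∈ (srt H e).map p, IsProjection x := by
  intro x hx
  simp only [List.mem_map] at hx
  obtain ⟨v, _, rfl⟩ := hx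
  exact hsol.1 v

set_option linter.unusedSectionVars false in
omit hsol in
lemma LL_len (e : Finset (Fin H.n)) : ((srt H e).map p).length = e.card := by
  simp [srt]

lemma LL_sum {e : Finset (Fin H.n)} (he : e ∈ H.edges) : ((srt H e).map p).sum = 1 := by
  rw [srt, ((Finset.sort_perm_toList e (·≤·)).map p).sum_eq, Finset.sum_map_toList]
  exact hsol.2 e he

lemma LL_orth {e : Finset (Fin H.n)} (he : e ∈ H.edges) :
    ∀ i j, i ≠ j → ((srt H e).map p).getD i 0 * ((srt H e).map p).getD j 0 = 0 := by
  intro i j hij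
  by_cases hi : i < ((srt H e).map p).length
  · by_cases hj : j < ((srt H e).map p).length
    · have hi' : i < (srt H e).length := by simpa using hi
      have hj' : j < (srt H e).length := by simpa using hj
      have e1 : ((srt H e).map p).getD i 0 = p ((srt H e)[i]) := by
        rw [List.getD_eq_getElem?_getD, List.getElem?_map, List.getElem?_eq_getElem hi']; rfl
      have e2 : ((srt H e).map p).getD j 0 = p ((srt H e)[j]) := by
        rw [List.getD_eq_getElem?_getD, List.getElem?_map, List.getElem?_eq_getElem hj']; rfl
      rw [e1, e2]
      refine pairwise_orth hsol.1 (hsol.2 e he) ?_ ?_ ?_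
      · rw [← Finset.mem_sort (α := Fin H.n) (· ≤ ·)]; exact List.getElem_mem hi'
      · rw [← Finset.mem_sort (α := Fin H.n) (· ≤ ·)]; exact List.getElem_mem hj'
      · intro h
        exact hij ((Finset.sort_nodup e (· ≤ ·)).getElem_inj_iff.mp h)
    · rw [List.getD_eq_default _ _ (le_of_not_gt hj), mul_zero]
  · rw [List.getD_eq_default _ _ (le_of_not_gt hi), zero_mul]

lemma LL_PS_card {e : Finset (Fin H.n)} (he : e ∈ H.edges) :
    PS ((srt H e).map p) e.card = 1 := by
  rw [← LL_len (p := p) e, PS_len]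
  exact LL_sum hsol he

omit hsol in
lemma getD_of_getElem? {e : Finset (Fin H.n)} {i : ℕ} {u : Fin H.n}
    (h : (srt H e)[i]? = some u) : ((srt H e).map p).getD i 0 = p u := by
  rw [List.getD_eq_getElem?_getD, List.getElem?_map, h]; rfl

end Fwd

lemma forward (H : FinHypergraph) (A : Type) [CStarAlgebra A] (p : Fin H.n → A)
    (hsol : IsSolution H A p) :
    ∃ q : In H → Fin 3 → A, (∀ x a, IsProjection (q x a)) ∧ (∀ x, ∑ a, q x a = 1) ∧
      ∀ x y a b, lam H (x, y, a, b) = false → q x a * q y b = 0 := by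
  classical
  refine ⟨qF H p, ?_, ?_, ?_⟩
  · -- projections
    rintro (v | ⟨e, i⟩) a
    · rw [qF_inl]
      fin_cases a
      · exact hsol.1 v
      · exact projection_compl (hsol.1 v)
      · exact projection_zero
    · by_cases h : e ∈ H.edges ∧ (i:ℕ)+1 < e.card
      · rw [qF_inr_pos h.1 h.2]
        fin_cases a
        · exact PS_proj (LL_proj hsol e) (LL_orth hsol h.1) _
        · exact gd_proj (LL_proj hsol e) _
        · exact projection_compl (PS_proj (LL_proj hsol e) (LL_orth hsol h.1) _)
      · rw [qF_inr_neg h]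
        fin_cases a
        · exact projection_one
        · exact projection_zero
        · exact projection_zero
  · -- sums
    rintro (v | ⟨e, i⟩)
    · rw [Fin.sum_univ_three, qF_inl]
      simp only [Fin.reduceFinMk, Fin.isValue, Matrix.cons_val_zero, Matrix.cons_val_one, Matrix.cons_val_two,
        Matrix.head_cons, Matrix.tail_cons]
      abel
    · by_cases h : e ∈ H.edges ∧ (i:ℕ)+1 < e.card
      · rw [Fin.sum_univ_three, qF_inr_pos h.1 h.2]
        simp only [Fin.reduceFinMk, Fin.isValue, Matrix.cons_val_zero, Matrix.cons_val_one, Matrix.cons_val_two,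
          Matrix.head_cons, Matrix.tail_cons]
        have hstep : PS ((srt H e).map p) ((i:ℕ)+2)
            = PS ((srt H e).map p) ((i:ℕ)+1) + ((srt H e).map p).getD ((i:ℕ)+1) 0 :=
          Finset.sum_range_succ _ _
        rw [hstep]; abel
      · rw [Fin.sum_univ_three, qF_inr_neg h]
        simp only [Fin.reduceFinMk, Fin.isValue, Matrix.cons_val_zero, Matrix.cons_val_one, Matrix.cons_val_two,
          Matrix.head_cons, Matrix.tail_cons]
        simp
  · -- orthogonality
    intro x y a b hlam
    rw [lam_false] at hlam
    rcases hlam with ⟨rfl, hab⟩ | ⟨hxy, hbad⟩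
    · -- diagonal
      rcases x with v | ⟨e, i⟩
      · rw [qF_inl]
        have h2 := (hsol.1 v).2
        fin_cases a <;> fin_cases b <;>
          simp only [Fin.reduceFinMk, Fin.isValue, Matrix.cons_val_zero, Matrix.cons_val_one, Matrix.cons_val_two,
            Matrix.head_cons, Matrix.tail_cons] <;>
          first
            | exact absurd rfl hab
            | rw [mul_sub, mul_one, h2, sub_self]
            | rw [sub_mul, one_mul, h2, sub_self]
            | rw [mul_zero]
            | rw [zero_mul]
      · by_cases h : e ∈ H.edges ∧ (i:ℕ)+1 < e.card
        · rw [qF_inr_pos h.1 h.2]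
          have hpj := LL_proj hsol (p := p) e
          have hor := LL_orth (p := p) hsol h.1
          fin_cases a <;> fin_cases b <;>
            simp only [Fin.reduceFinMk, Fin.isValue, Matrix.cons_val_zero, Matrix.cons_val_one, Matrix.cons_val_two,
              Matrix.head_cons, Matrix.tail_cons] <;>
            first
              | exact absurd rfl hab
              | exact PS_mul_g hor (le_refl _)
              | exact g_mul_PS hor (le_refl _)
              | rw [mul_sub, mul_one, PS_mul_PS' hpj hor (by omega), sub_self]
              | rw [sub_mul, one_mul, PS_mul_PS hpj hor (by omega), sub_self]
              | rw [mul_sub, mul_one, g_mul_PS_lt hpj hor (by omega), sub_self]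
              | rw [sub_mul, one_mul, PS_mul_g_lt hpj hor (by omega), sub_self]
        · rw [qF_inr_neg h]
          fin_cases a <;> fin_cases b <;>
            first
              | exact absurd rfl hab
              | simp
    · -- Bad
      rcases hbad with ⟨e, he, i, u, hi, hu, rfl, rfl, hab⟩
        | ⟨e, he, i, j, hi, hj, rfl, rfl, hab⟩
        | ⟨e, he, u, hcard, hu, rfl, rfl, hab⟩
        | ⟨e, he, i, hcard, rfl, rfl, rfl⟩
        | ⟨e, he, u, hcard, hu, rfl, rfl, hab⟩
        | ⟨hemem, rfl, rfl⟩
      · -- clause 1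
        rw [qF_inr_pos he hi, qF_inl]
        have hgu : ((srt H e).map p).getD ((i:ℕ)+1) 0 = p u := getD_of_getElem? hu
        have hpj := LL_proj hsol (p := p) e
        have hor := LL_orth (p := p) hsol he
        rcases hab with ⟨rfl, rfl⟩ | ⟨rfl, rfl⟩ | ⟨rfl, rfl⟩ | ⟨rfl, rfl⟩ <;>
          simp only [Fin.reduceFinMk, Fin.isValue, Matrix.cons_val_zero, Matrix.cons_val_one, Matrix.cons_val_two,
            Matrix.head_cons, Matrix.tail_cons]
        · rw [← hgu, mul_sub, mul_one, (gd_proj hpj _).2, sub_self]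
        · rw [mul_zero]
        · rw [← hgu]; exact PS_mul_g hor (le_refl _)
        · rw [← hgu, sub_mul, one_mul, PS_mul_g_lt hpj hor (by omega), sub_self]
      · -- clause 2
        have hjr : (j:ℕ) + 1 < e.card := by omega
        rw [qF_inr_pos he hjr, qF_inr_pos he (by omega : (i:ℕ)+1 < e.card)]
        have hpj := LL_proj hsol (p := p) e
        have hor := LL_orth (p := p) hsol he
        rw [hj]
        rcases hab with ⟨rfl, rfl⟩ | ⟨rfl, rfl⟩ | ⟨rfl, rfl⟩ | ⟨rfl, rfl⟩ | ⟨rfl, rfl⟩ <;>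
          simp only [Fin.reduceFinMk, Fin.isValue, Matrix.cons_val_zero, Matrix.cons_val_one, Matrix.cons_val_two,
            Matrix.head_cons, Matrix.tail_cons]
        · rw [mul_sub, mul_one, PS_mul_PS' hpj hor (by omega), sub_self]
        · exact g_mul_PS hor (by omega)
        · exact hor _ _ (by omega)
        · rw [sub_mul, one_mul, PS_mul_PS hpj hor (by omega), sub_self]
        · rw [sub_mul, one_mul, PS_mul_g_lt hpj hor (by omega), sub_self]
      · -- clause 3
        rw [qF_inr_pos he (by simp; omega), qF_inl]
        have hgu : ((srt H e).map p).getD 0 0 = p u := getD_of_getElem? hu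
        have hpj := LL_proj hsol (p := p) e
        have hor := LL_orth (p := p) hsol he
        have hPS1 : PS ((srt H e).map p) (((0 : Fin (H.n+2)):ℕ)+1) = p u := by
          simp only [Fin.val_zero, zero_add]
          rw [PS, Finset.sum_range_one, hgu]
        rcases hab with ⟨rfl, rfl⟩ | ⟨rfl, rfl⟩ | ⟨rfl, rfl⟩ | ⟨rfl, rfl⟩ <;>
          simp only [Fin.reduceFinMk, Fin.isValue, Matrix.cons_val_zero, Matrix.cons_val_one, Matrix.cons_val_two,
            Matrix.head_cons, Matrix.tail_cons]
        · rw [hPS1, mul_sub, mul_one, (hsol.1 u).2, sub_self]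
        · rw [mul_zero]
        · simp only [Fin.val_zero, zero_add]
          rw [← hgu]; exact hor _ _ (by omega)
        · simp only [Fin.val_zero, zero_add]
          rw [← hgu, sub_mul, one_mul, PS_mul_g_lt hpj hor (by omega), sub_self]
      · -- clause 4
        rw [qF_inr_pos he (by omega : (i:ℕ)+1 < e.card)]
        have : PS ((srt H e).map p) ((i:ℕ)+2) = 1 := by
          rw [hcard]; exact LL_PS_card hsol he
        simp only [Matrix.cons_val_two, Matrix.head_cons, Matrix.tail_cons]
        rw [this, sub_self, zero_mul]
      · -- clause 5
        rw [qF_inl]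
        have hgu : ((srt H e).map p).getD 0 0 = p u := getD_of_getElem? hu
        have hpu : p u = 1 := by
          rw [← hgu, ← Finset.sum_range_one (f := fun j => ((srt H e).map p).getD j 0)]
          have : (1:ℕ) = e.card := hcard.symm
          rw [show (∑ j ∈ Finset.range 1, ((srt H e).map p).getD j 0)
              = PS ((srt H e).map p) 1 from rfl]
          rw [this]; exact LL_PS_card hsol he
        rcases hab with rfl | rfl <;>
          simp only [Fin.reduceFinMk, Fin.isValue, Matrix.cons_val_zero, Matrix.cons_val_one, Matrix.cons_val_two,
            Matrix.head_cons, Matrix.tail_cons]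
        · rw [hpu, sub_self, zero_mul]
        · rw [zero_mul]
      · -- clause 6
        have h0 : (0:A) = 1 := by
          have := hsol.2 ∅ hemem
          simpa using this
        have : ∀ z : A, z = 0 := fun z => by rw [← mul_one z, ← h0, mul_zero]
        exact this _

open Fin.NatCast in
lemma reverse (H : FinHypergraph) (A : Type) [CStarAlgebra A]
    (q : In H → Fin 3 → A) (hqp : ∀ x a, IsProjection (q x a))
    (hq1 : ∀ x, ∑ a, q x a = 1)
    (horth : ∀ x y a b, lam H (x, y, a, b) = false → q x a * q y b = 0) :
    ∃ p : Fin H.n → A, IsSolution H A p := by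
  classical
  have hbad : ∀ x y a b, x ≠ y → Bad H x y a b → q x a * q y b = 0 := by
    intro x y a b hxy hb
    exact horth x y a b (by rw [lam_false]; exact Or.inr ⟨hxy, hb⟩)
  have hsum3 : ∀ x, q x 0 + q x 1 + q x 2 = 1 := fun x => by
    rw [← Fin.sum_univ_three (f := fun a => q x a)]; exact hq1 x
  have hkill : ∀ x a y, (∀ b, q x a * q y b = 0) → q x a = 0 := by
    intro x a y h
    calc q x a = q x a * ∑ b, q y b := by rw [hq1 y, mul_one]
      _ = ∑ b, q x a * q y b := by rw [Finset.mul_sum]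
      _ = 0 := by simp [h]
  set p : Fin H.n → A := fun v => q (Sum.inl v) 0 with hpdef
  refine ⟨p, fun v => hqp _ _, ?_⟩
  intro e he
  have hkn : e.card ≤ H.n := by simpa using Finset.card_le_univ e
  have hfin : ∀ m : ℕ, m < H.n + 2 → (((m : Fin (H.n+2))) : ℕ) = m := fun m hm => by
    simp [Fin.val_natCast, Nat.mod_eq_of_lt hm]
  have hsum_list : ∑ v ∈ e, p v = ((srt H e).map p).sum := by
    rw [srt, ((Finset.sort_perm_toList e (·≤·)).map p).sum_eq, Finset.sum_map_toList]
  rcases Nat.lt_or_ge e.card 2 with hklt | hk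
  · -- card 0 or 1
    rcases Nat.lt_or_ge e.card 1 with h0 | h1
    · -- card 0
      have he0 : e = ∅ := Finset.card_eq_zero.mp (by omega)
      have hemem : (∅ : Finset (Fin H.n)) ∈ H.edges := he0 ▸ he
      have hne : (Sum.inr ((∅ : Finset (Fin H.n)), (0 : Fin (H.n+2))) : In H)
          ≠ Sum.inr ((∅ : Finset (Fin H.n)), (1 : Fin (H.n+2))) := by
        simp only [ne_eq, Sum.inr.injEq, Prod.mk.injEq, true_and]
        simp [Fin.ext_iff]
      have hJ : ∀ a, q (Sum.inr ((∅ : Finset (Fin H.n)), (0 : Fin (H.n+2)))) a = 0 := by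
        intro a
        refine hkill _ a (Sum.inr ((∅ : Finset (Fin H.n)), (1 : Fin (H.n+2)))) ?_
        intro b
        exact hbad _ _ _ _ hne (Or.inr (Or.inr (Or.inr (Or.inr (Or.inr ⟨hemem, rfl, rfl⟩)))))
      have h10 : (1:A) = 0 := by
        rw [← hsum3 (Sum.inr ((∅ : Finset (Fin H.n)), (0 : Fin (H.n+2))))]
        simp [hJ]
      rw [he0, Finset.sum_empty]
      exact h10.symm
    · -- card 1
      have h1 : e.card = 1 := by omega
      obtain ⟨w, rfl⟩ := Finset.card_eq_one.mp h1
      have husome : (srt H {w})[0]? = some w := by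
        rw [srt, Finset.sort_singleton]; rfl
      have hc : ∀ a : Fin 3, (a = 1 ∨ a = 2) → q (Sum.inl w) a = 0 := by
        intro a ha
        refine hkill _ a (Sum.inr ((∅ : Finset (Fin H.n)), (0 : Fin (H.n+2)))) ?_
        intro b
        refine hbad _ _ _ _ (by simp) ?_
        exact Or.inr (Or.inr (Or.inr (Or.inr (Or.inl
          ⟨{w}, he, w, h1, husome, rfl, rfl, ha⟩))))
      have := hsum3 (Sum.inl w)
      rw [hc 1 (Or.inl rfl), hc 2 (Or.inr rfl), add_zero, add_zero] at this
      rw [Finset.sum_singleton]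
      exact this
  · -- card ≥ 2
    set L : List A := (srt H e).map p with hLdef
    have hlen' : (srt H e).length = e.card := Finset.length_sort _
    have hLlen : L.length = e.card := by rw [hLdef, List.length_map, hlen']
    have hB1 : ∀ i : ℕ, i + 2 ≤ e.card →
        q (Sum.inr (e, (i : Fin (H.n+2)))) 1 = L.getD (i+1) 0 := by
      intro i hik
      have hival : (((i : Fin (H.n+2))) : ℕ) = i := hfin i (by omega)
      have hi1 : i + 1 < (srt H e).length := by omega
      have husome : (srt H e)[i+1]? = some ((srt H e)[i+1]) := List.getElem?_eq_getElem hi1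
      have hgu : L.getD (i+1) 0 = p ((srt H e)[i+1]) := by
        rw [hLdef, List.getD_eq_getElem?_getD, List.getElem?_map, husome]; rfl
      have c : ∀ (a b : Fin 3),
          ((a = 1 ∧ b = 1) ∨ (a = 1 ∧ b = 2) ∨ (a = 0 ∧ b = 0) ∨ (a = 2 ∧ b = 0)) →
          q (Sum.inr (e, (i : Fin (H.n+2)))) a * q (Sum.inl ((srt H e)[i+1])) b = 0 := by
        intro a b hab
        refine hbad _ _ _ _ (by simp) ?_
        refine Or.inl ⟨e, he, (i : Fin (H.n+2)), (srt H e)[i+1], ?_, ?_, rfl, rfl, hab⟩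
        · rw [hival]; omega
        · rw [hival]; exact husome
      rw [hgu]
      exact eq13 (hsum3 _) (hsum3 (Sum.inl ((srt H e)[i+1])))
        (c 1 1 (by tauto)) (c 1 2 (by tauto)) (c 0 0 (by tauto)) (c 2 0 (by tauto))
    have hB0 : q (Sum.inr (e, (0 : Fin (H.n+2)))) 0 = L.getD 0 0 := by
      have hi1 : 0 < (srt H e).length := by omega
      have husome : (srt H e)[0]? = some ((srt H e)[0]) := List.getElem?_eq_getElem hi1
      have hgu : L.getD 0 0 = p ((srt H e)[0]) := by
        rw [hLdef, List.getD_eq_getElem?_getD, List.getElem?_map, husome]; rfl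
      have c : ∀ (a b : Fin 3),
          ((a = 0 ∧ b = 1) ∨ (a = 0 ∧ b = 2) ∨ (a = 1 ∧ b = 0) ∨ (a = 2 ∧ b = 0)) →
          q (Sum.inr (e, (0 : Fin (H.n+2)))) a * q (Sum.inl ((srt H e)[0])) b = 0 := by
        intro a b hab
        refine hbad _ _ _ _ (by simp) ?_
        exact Or.inr (Or.inr (Or.inl ⟨e, he, (srt H e)[0], hk, husome, rfl, rfl, hab⟩))
      rw [hgu]
      exact eq03 (hsum3 _) (hsum3 (Sum.inl ((srt H e)[0])))
        (c 0 1 (by tauto)) (c 0 2 (by tauto)) (c 1 0 (by tauto)) (c 2 0 (by tauto))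
    have hstep : ∀ i : ℕ, i + 3 ≤ e.card →
        q (Sum.inr (e, ((i+1 : ℕ) : Fin (H.n+2)))) 0
          = q (Sum.inr (e, (i : Fin (H.n+2)))) 0 + q (Sum.inr (e, (i : Fin (H.n+2)))) 1 := by
      intro i hik
      have hival : (((i : Fin (H.n+2))) : ℕ) = i := hfin i (by omega)
      have hjval : ((((i+1 : ℕ) : Fin (H.n+2))) : ℕ) = i + 1 := hfin (i+1) (by omega)
      have hne : (Sum.inr (e, ((i+1 : ℕ) : Fin (H.n+2))) : In H)
          ≠ Sum.inr (e, (i : Fin (H.n+2))) := by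
        simp only [ne_eq, Sum.inr.injEq, Prod.mk.injEq, true_and]
        intro hji
        have := congrArg Fin.val hji
        rw [hjval, hival] at this
        omega
      have c : ∀ (a b : Fin 3),
          ((a = 0 ∧ b = 2) ∨ (a = 1 ∧ b = 0) ∨ (a = 1 ∧ b = 1) ∨ (a = 2 ∧ b = 0) ∨ (a = 2 ∧ b = 1)) →
          q (Sum.inr (e, ((i+1 : ℕ) : Fin (H.n+2)))) a * q (Sum.inr (e, (i : Fin (H.n+2)))) b = 0 := by
        intro a b hab
        refine hbad _ _ _ _ hne ?_
        refine Or.inr (Or.inl ⟨e, he, (i : Fin (H.n+2)), ((i+1 : ℕ) : Fin (H.n+2)), ?_, ?_, rfl, rfl, hab⟩)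
        · rw [hival]; omega
        · rw [hjval, hival]
      exact sum13 (hsum3 _) (hsum3 _)
        (c 0 2 (by tauto)) (c 1 0 (by tauto)) (c 1 1 (by tauto)) (c 2 0 (by tauto)) (c 2 1 (by tauto))
    have hind : ∀ i : ℕ, i + 2 ≤ e.card →
        q (Sum.inr (e, (i : Fin (H.n+2)))) 0 = PS L (i+1) := by
      intro i
      induction i with
      | zero =>
        intro _
        rw [show ((0 : ℕ) : Fin (H.n+2)) = (0 : Fin (H.n+2)) from by simp, hB0]
        rw [PS, Finset.sum_range_one]
      | succ m ih =>
        intro h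
        rw [hstep m (by omega), ih (by omega), hB1 m (by omega)]
        exact (Finset.sum_range_succ _ _).symm
    have hne' : e ≠ (∅ : Finset (Fin H.n)) := by
      intro h
      rw [h, Finset.card_empty] at hk
      omega
    have hlast : q (Sum.inr (e, ((e.card - 2 : ℕ) : Fin (H.n+2)))) 2 = 0 := by
      refine hkill _ _ (Sum.inr ((∅ : Finset (Fin H.n)), (0 : Fin (H.n+2)))) ?_
      intro b
      refine hbad _ _ _ _ ?_ ?_
      · simp only [ne_eq, Sum.inr.injEq, Prod.mk.injEq, not_and]
        intro h1
        exact absurd h1 hne'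
      · refine Or.inr (Or.inr (Or.inr (Or.inl ⟨e, he, ((e.card - 2 : ℕ) : Fin (H.n+2)), ?_, rfl, rfl, rfl⟩)))
        rw [hfin (e.card - 2) (by omega)]
        omega
    have h1 := hsum3 (Sum.inr (e, ((e.card - 2 : ℕ) : Fin (H.n+2))))
    rw [hind (e.card - 2) (by omega), hB1 (e.card - 2) (by omega), hlast, add_zero] at h1
    have hrec : PS L ((e.card - 2 + 1) + 1) = PS L (e.card - 2 + 1) + L.getD (e.card - 2 + 1) 0 :=
      Finset.sum_range_succ _ _
    rw [show (e.card - 2 + 1) + 1 = e.card from by omega] at hrec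
    have h3 : PS L e.card = 1 := by rw [hrec, h1]
    rw [hsum_list, ← PS_len, hLlen]
    exact h3

end HGG

/-- For every finite hypergraph `H` there is a synchronous nonlocal game, with finite input
set `I`, output set `O` of cardinality `3`, and winning rule `lam`, such that for every
unital C*-algebra `A`, the hypergraph `H` has a solution in `A` if and only if the game has
a solution in `A` (a family of projections `q x a` with `∑ a, q x a = 1` for each input `x`
and `q x a * q y b = 0` whenever `lam (x, y, a, b) = false`). -/
theorem exists_synchronous_game_of_hypergraph (H : FinHypergraph) :
    ∃ (I O : Type) (fI : Fintype I) (fO : Fintype O) (lam : I × I × O × O → Bool),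
      letI := fI; letI := fO;
      Fintype.card O = 3 ∧
      (∀ (x : I) (a b : O), lam (x, x, a, b) = true ↔ a = b) ∧
      ∀ (A : Type) [CStarAlgebra A],
        (∃ p : Fin H.n → A, IsSolution H A p) ↔
        (∃ q : I → O → A, (∀ x a, IsProjection (q x a)) ∧ (∀ x, ∑ a, q x a = 1) ∧
          ∀ x y a b, lam (x, y, a, b) = false → q x a * q y b = 0) := by
  classical
  refine ⟨HGG.In H, Fin 3, inferInstance, inferInstance, HGG.lam H, ?_, ?_, ?_⟩
  · simp
  · exact fun x a b => HGG.lam_diag H x a b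
  · intro A _
    constructor
    · rintro ⟨p, hsol⟩
      exact HGG.forward H A p hsol
    · rintro ⟨q, hqp, hq1, horth⟩
      exact HGG.reverse H A q hqp hq1 horth
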